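/- Let (Ω, 𝓖, μ) be a probability space with a filtration (𝓕_t)_{t=0,…,T}, and let C_1, …, C_T ≥ 0 be constants. For t = 1,…,T, let I_t ∈ {0,1} and P_t ≥ 0 be 𝓕_{t−1}-measurable random variables, and let E_t ≥ 0 be an 𝓕_t-measurable integrable random variable with E[E_t | 𝓕_{t−1}] ≤ 1 almost surely. Define L_0 = 0 and, for t ≥ 1, require P_t ≤ L_{t−1} and set L_t = (L_{t−1} + C_t·I_t − P_t)·E_t on {I_t = 1} and L_t = L_{t−1} − P_t on {I_t = 0}; assume each L_t is integrable. Then the net-profit process N_t = L_t + Σ_{s=1}^t P_s − Σ_{s=1}^t C_s·I_s, with N_0 = 0, is a supermartingale with respect to (𝓕_t). -/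

import Mathlib

open MeasureTheory Filter

/-- In the multi-round statistical contract under a null agent
type—where the license `L` starts at `0`, at each stage the agent may withdraw
`P_t ≤ L_{t-1}` and may pay `C_t` (indicator `I_t`) to multiply the license by a
conditional e-value `E_t` (with `E[E_t | 𝓕_{t-1}] ≤ 1`)—the net-profit process
`N_t = L_t + Σ_{s≤t} P_s − Σ_{s≤t} C_s·I_s` is a supermartingale. -/
theorem stmt_9 {Ω : Type*} {m0 : MeasurableSpace Ω}
    (μ : Measure Ω) [IsProbabilityMeasure μ]
    (ℱ : Filtration ℕ m0)
    (Cc : ℕ → ℝ) (hCc : ∀ t, 0 ≤ Cc t)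
    (I P E : ℕ → Ω → ℝ)
    (hI01 : ∀ t ω, I t ω = 0 ∨ I t ω = 1)
    (hImeas : ∀ t, StronglyMeasurable[ℱ t] (I (t + 1)))
    (hPmeas : ∀ t, StronglyMeasurable[ℱ t] (P (t + 1)))
    (hPnonneg : ∀ t ω, 0 ≤ P t ω)
    (hEmeas : ∀ t, StronglyMeasurable[ℱ (t + 1)] (E (t + 1)))
    (hEnonneg : ∀ t ω, 0 ≤ E t ω)
    (hEint : ∀ t, Integrable (E t) μ)
    (hEcond : ∀ t, μ[E (t + 1)|ℱ t] ≤ᵐ[μ] fun _ => (1 : ℝ))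
    (L : ℕ → Ω → ℝ)
    (hL0 : ∀ ω, L 0 ω = 0)
    (hPleL : ∀ t ω, P (t + 1) ω ≤ L t ω)
    (hLrec : ∀ t ω, L (t + 1) ω =
      if I (t + 1) ω = 1 then (L t ω + Cc (t + 1) - P (t + 1) ω) * E (t + 1) ω
      else L t ω - P (t + 1) ω)
    (hLint : ∀ t, Integrable (L t) μ) :
    Supermartingale
      (fun t ω => L t ω + (∑ s ∈ Finset.range t, P (s + 1) ω)
        - ∑ s ∈ Finset.range t, Cc (s + 1) * I (s + 1) ω) ℱ μ := by
  -- measurability of L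
  have hLmeas : ∀ t, StronglyMeasurable[ℱ t] (L t) := by
    intro t
    induction t with
    | zero =>
      have : L 0 = fun _ => (0 : ℝ) := funext hL0
      rw [this]; exact stronglyMeasurable_const
    | succ t ih =>
      have hfun : L (t + 1) = fun ω =>
          if I (t + 1) ω = 1 then (L t ω + Cc (t + 1) - P (t + 1) ω) * E (t + 1) ω
          else L t ω - P (t + 1) ω := funext (hLrec t)
      rw [hfun]
      have hImeas' : StronglyMeasurable[ℱ (t + 1)] (I (t + 1)) :=
        (hImeas t).mono (ℱ.mono (Nat.le_succ t))
      have hset : MeasurableSet[ℱ (t + 1)] {ω | I (t + 1) ω = 1} :=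
        measurableSet_eq_fun hImeas'.measurable measurable_const
      have h1 : StronglyMeasurable[ℱ (t + 1)]
          (fun ω => (L t ω + Cc (t + 1) - P (t + 1) ω) * E (t + 1) ω) :=
        (((ih.mono (ℱ.mono (Nat.le_succ t))).add stronglyMeasurable_const).sub
          ((hPmeas t).mono (ℱ.mono (Nat.le_succ t)))).mul (hEmeas t)
      have h2 : StronglyMeasurable[ℱ (t + 1)] (fun ω => L t ω - P (t + 1) ω) :=
        (ih.mono (ℱ.mono (Nat.le_succ t))).sub ((hPmeas t).mono (ℱ.mono (Nat.le_succ t)))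
      exact StronglyMeasurable.ite hset h1 h2
  -- integrability of P (t+1)
  have hPint : ∀ t, Integrable (P (t + 1)) μ := by
    intro t
    refine (hLint t).mono ((hPmeas t).mono (ℱ.le t)).aestronglyMeasurable ?_
    refine Filter.Eventually.of_forall fun ω => ?_
    rw [Real.norm_eq_abs, Real.norm_eq_abs, abs_of_nonneg (hPnonneg _ ω)]
    exact (hPleL t ω).trans (le_abs_self _)
  have hIint : ∀ t, Integrable (I (t + 1)) μ := by
    intro t
    refine (integrable_const (1 : ℝ)).mono ((hImeas t).mono (ℱ.le t)).aestronglyMeasurable ?_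
    refine Filter.Eventually.of_forall fun ω => ?_
    rcases hI01 (t + 1) ω with h | h <;> simp [h]
  -- integrability of N
  have hNint : ∀ t, Integrable (fun ω => L t ω + (∑ s ∈ Finset.range t, P (s + 1) ω)
      - ∑ s ∈ Finset.range t, Cc (s + 1) * I (s + 1) ω) μ := by
    intro t
    exact ((hLint t).add (integrable_finset_sum _ fun s _ => hPint s)).sub
      (integrable_finset_sum _ fun s _ => (hIint s).const_mul _)
  refine supermartingale_nat ?_ hNint ?_
  · intro t
    exact ((hLmeas t).add (Finset.stronglyMeasurable_fun_sum _ fun s hs =>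
      (hPmeas s).mono (ℱ.mono (Finset.mem_range.mp hs).le))).sub
      (Finset.stronglyMeasurable_fun_sum _ fun s hs =>
        ((hImeas s).mono (ℱ.mono (Finset.mem_range.mp hs).le)).const_mul _)
  · intro t
    set B : Ω → ℝ := fun ω => I (t + 1) ω * (L t ω + Cc (t + 1) - P (t + 1) ω) with hB
    set N : ℕ → Ω → ℝ := fun t ω => L t ω + (∑ s ∈ Finset.range t, P (s + 1) ω)
      - ∑ s ∈ Finset.range t, Cc (s + 1) * I (s + 1) ω with hNdef
    have hAnonneg : ∀ ω, 0 ≤ L t ω + Cc (t + 1) - P (t + 1) ω := fun ω => by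
      have := hPleL t ω; have := hCc (t + 1); linarith
    have hBnonneg : ∀ ω, 0 ≤ B ω := fun ω => by
      rcases hI01 (t + 1) ω with h | h <;> simp [hB, h, hAnonneg ω]
    have hBmeas : StronglyMeasurable[ℱ t] B :=
      (hImeas t).mul (((hLmeas t).add stronglyMeasurable_const).sub (hPmeas t))
    have hAint : Integrable (fun ω => L t ω + Cc (t + 1) - P (t + 1) ω) μ :=
      ((hLint t).add (integrable_const _)).sub (hPint t)
    have hBint : Integrable B μ := by
      refine hAint.mono (hBmeas.mono (ℱ.le t)).aestronglyMeasurable ?_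
      refine Filter.Eventually.of_forall fun ω => ?_
      rcases hI01 (t + 1) ω with h | h <;> simp [hB, h, abs_nonneg]
    have hBEint : Integrable (B * E (t + 1)) μ := by
      refine (hLint (t + 1)).mono ((hBmeas.mono (ℱ.le t)).mul
        ((hEmeas t).mono (ℱ.le (t + 1)))).aestronglyMeasurable ?_
      refine Filter.Eventually.of_forall fun ω => ?_
      rcases hI01 (t + 1) ω with h | h
      · simp [hB, Pi.mul_apply, h]
      · have : (B * E (t + 1)) ω = L (t + 1) ω := by
          simp only [Pi.mul_apply, hB, h, one_mul]
          rw [hLrec t ω, if_pos h]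
        rw [this]
    -- key pointwise identity
    have hNrec : N (t + 1) = fun ω => N t ω + ((B * E (t + 1)) ω - B ω) := by
      funext ω
      simp only [hNdef, Pi.mul_apply, hB, Finset.sum_range_succ]
      rcases hI01 (t + 1) ω with h | h
      · rw [hLrec t ω, if_neg (by rw [h]; norm_num)]; rw [h]; ring
      · rw [hLrec t ω, if_pos h, h]; ring
    calc μ[N (t + 1)|ℱ t]
        =ᵐ[μ] μ[N t|ℱ t] + (μ[B * E (t + 1)|ℱ t] - μ[B|ℱ t]) := by
          rw [hNrec]
          refine (condExp_add (hNint t) (hBEint.sub hBint) _).trans ?_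
          exact EventuallyEq.rfl.add (condExp_sub hBEint hBint _)
      _ =ᵐ[μ] fun ω => N t ω + (B ω * (μ[E (t + 1)|ℱ t]) ω - B ω) := by
          have h1 : μ[N t|ℱ t] = N t :=
            condExp_of_stronglyMeasurable (ℱ.le t)
              (((hLmeas t).add (Finset.stronglyMeasurable_fun_sum _ fun s hs =>
                (hPmeas s).mono (ℱ.mono (Finset.mem_range.mp hs).le))).sub
                (Finset.stronglyMeasurable_fun_sum _ fun s hs =>
                  ((hImeas s).mono (ℱ.mono (Finset.mem_range.mp hs).le)).const_mul _)) (hNint t)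
          have h2 : μ[B|ℱ t] = B := condExp_of_stronglyMeasurable (ℱ.le t) hBmeas hBint
          have h3 := condExp_mul_of_stronglyMeasurable_left hBmeas hBEint (hEint (t + 1))
          rw [h1, h2]
          filter_upwards [h3] with ω hω
          simp only [Pi.add_apply, Pi.sub_apply]
          rw [hω]
          rfl
      _ ≤ᵐ[μ] N t := by
          filter_upwards [hEcond t] with ω hω
          have hb := hBnonneg ω
          have : B ω * (μ[E (t + 1)|ℱ t]) ω ≤ B ω * 1 :=
            mul_le_mul_of_nonneg_left hω hb

          linarith
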